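/- (Betti–Ritter formula.) Let γ ∈ (6/5, 2), K > 0, G > 0, R > 0. Let ρ : [0,R] → ℝ be continuous, continuously differentiable on (0,R), with ρ(r) > 0 for r ∈ [0,R) and ρ(R) = 0. Set p(r) = K·ρ(r)^γ, M(r) = ∫₀^r 4π s² ρ(s) ds and Mtot = M(R) > 0, and assume p'(r) = −G·M(r)·ρ(r)/r² on (0,R). Then the gravitational potential energy satisfies E_G := −∫₀^R G·M(r)·M'(r)/r dr = −(3(γ−1)/(5γ−6))·G·Mtot²/R, where M'(r) = 4π r² ρ(r). -/

import Mathlib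

open Set intervalIntegral

/-- Betti–Ritter formula: for a polytropic star `p = K·ρ^γ`, `γ ∈ (6/5, 2)`, in
hydrostatic equilibrium, the gravitational energy is
`E_G = −∫₀^R G·M·M'/r dr = −(3(γ−1)/(5γ−6))·G·Mtot²/R`. -/
theorem stmt8 (γ K G R : ℝ) (hγ : γ ∈ Ioo (6 / 5 : ℝ) 2) (hK : 0 < K)
    (hG : 0 < G) (hR : 0 < R)
    (ρ ρ' : ℝ → ℝ)
    (hρ_cont : ContinuousOn ρ (Icc 0 R))
    (hρ_deriv : ∀ r ∈ Ioo (0 : ℝ) R, HasDerivAt ρ (ρ' r) r)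
    (hρ'_cont : ContinuousOn ρ' (Ioo 0 R))
    (hρ_pos : ∀ r ∈ Ico (0 : ℝ) R, 0 < ρ r) (hρR : ρ R = 0)
    (M : ℝ → ℝ)
    (hM : ∀ r, M r = ∫ s in (0 : ℝ)..r, 4 * Real.pi * s ^ 2 * ρ s)
    (hMtot : 0 < M R)
    (hp_deriv : ∀ r ∈ Ioo (0 : ℝ) R,
      HasDerivAt (fun s => K * ρ s ^ γ) (-(G * M r * ρ r) / r ^ 2) r) :
    -(∫ r in (0 : ℝ)..R, G * M r * (4 * Real.pi * r ^ 2 * ρ r) / r)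
      = -(3 * (γ - 1) / (5 * γ - 6)) * G * (M R) ^ 2 / R := by
  obtain ⟨hγ1, hγ2⟩ := hγ
  have hγ1' : (1 : ℝ) < γ := by linarith
  have h5 : (0 : ℝ) < 5 * γ - 6 := by linarith
  have hγne : γ - 1 ≠ 0 := ne_of_gt (by linarith)
  have hγne0 : γ ≠ 0 := ne_of_gt (by linarith)
  have h5ne : (5 : ℝ) * γ - 6 ≠ 0 := ne_of_gt h5
  have hπ : (0 : ℝ) < Real.pi := Real.pi_pos
  have hρ_nonneg : ∀ r ∈ Icc (0 : ℝ) R, 0 ≤ ρ r := by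
    intro r hr
    rcases lt_or_eq_of_le hr.2 with h | h
    · exact (hρ_pos r ⟨hr.1, h⟩).le
    · rw [h, hρR]
  -- continuity of the mass integrand
  have hfc : ContinuousOn (fun s : ℝ => 4 * Real.pi * s ^ 2 * ρ s) (Icc 0 R) :=
    ((continuous_const.mul (continuous_pow 2)).continuousOn).mul hρ_cont
  have hMcont : ContinuousOn M (Icc 0 R) := by
    have hMeq : M = fun r => ∫ s in (0 : ℝ)..r, 4 * Real.pi * s ^ 2 * ρ s := funext hM
    rw [hMeq]
    have := intervalIntegral.continuousOn_primitive_interval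
      (f := fun s : ℝ => 4 * Real.pi * s ^ 2 * ρ s) (a := 0) (b := R) (μ := MeasureTheory.volume)
      (by rw [uIcc_of_le hR.le]; exact hfc.integrableOn_Icc)
    rwa [uIcc_of_le hR.le] at this
  have hM0 : M 0 = 0 := by rw [hM]; simp
  -- derivative of M
  have hMderiv : ∀ r ∈ Ioo (0 : ℝ) R, HasDerivAt M (4 * Real.pi * r ^ 2 * ρ r) r := by
    intro r hr
    have hmem : Icc (0 : ℝ) R ∈ nhds r := Icc_mem_nhds hr.1 hr.2
    have hca : ContinuousAt (fun s : ℝ => 4 * Real.pi * s ^ 2 * ρ s) r :=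
      hfc.continuousAt hmem
    have hint : IntervalIntegrable (fun s : ℝ => 4 * Real.pi * s ^ 2 * ρ s)
        MeasureTheory.volume 0 r :=
      (hfc.mono (Icc_subset_Icc le_rfl hr.2.le)).intervalIntegrable_of_Icc hr.1.le
    have hms : StronglyMeasurableAtFilter (fun s : ℝ => 4 * Real.pi * s ^ 2 * ρ s)
        (nhds r) MeasureTheory.volume :=
      ⟨Icc 0 R, hmem, hfc.aestronglyMeasurable measurableSet_Icc⟩
    have h1 := intervalIntegral.integral_hasDerivAt_right hint hms hca
    exact h1.congr_of_eventuallyEq (Filter.Eventually.of_forall fun x => hM x)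
  -- bound on ρ and M
  obtain ⟨x₀, hx₀, hx₀max⟩ := isCompact_Icc.exists_isMaxOn (nonempty_Icc.2 hR.le) hρ_cont
  set C : ℝ := ρ x₀ with hCdef
  have hC : ∀ s ∈ Icc (0 : ℝ) R, ρ s ≤ C := fun s hs => hx₀max hs
  have hC0 : 0 ≤ C := le_trans (hρ_nonneg 0 ⟨le_rfl, hR.le⟩) (hC 0 ⟨le_rfl, hR.le⟩)
  have hMabs : ∀ r ∈ Icc (0 : ℝ) R, |M r| ≤ 4 * Real.pi * C * r ^ 3 := by
    intro r hr
    have h1 : ∀ s ∈ uIoc (0 : ℝ) r, ‖4 * Real.pi * s ^ 2 * ρ s‖ ≤ 4 * Real.pi * C * r ^ 2 := by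
      intro s hs
      rw [uIoc_of_le hr.1] at hs
      have hsIcc : s ∈ Icc (0 : ℝ) R := ⟨hs.1.le, hs.2.trans hr.2⟩
      have h0 : 0 ≤ 4 * Real.pi * s ^ 2 * ρ s := by
        have := hρ_nonneg s hsIcc; positivity
      rw [Real.norm_eq_abs, abs_of_nonneg h0]
      have hs2 : s ^ 2 ≤ r ^ 2 := by nlinarith [hs.1.le, hs.2]
      have hρC := hC s hsIcc
      have hρ0 := hρ_nonneg s hsIcc
      have ha : s ^ 2 * ρ s ≤ r ^ 2 * C := by nlinarith [sq_nonneg s]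
      have hb := mul_le_mul_of_nonneg_left ha (by positivity : (0:ℝ) ≤ 4 * Real.pi)
      nlinarith [hb]
    have h2 := intervalIntegral.norm_integral_le_of_norm_le_const h1
    rw [hM, Real.norm_eq_abs] at *
    calc |∫ s in (0:ℝ)..r, 4 * Real.pi * s ^ 2 * ρ s|
        ≤ 4 * Real.pi * C * r ^ 2 * |r - 0| := h2
      _ = 4 * Real.pi * C * r ^ 3 := by rw [sub_zero, abs_of_nonneg hr.1]; ring
  have hMnonneg : ∀ r ∈ Icc (0 : ℝ) R, 0 ≤ M r := by
    intro r hr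
    rw [hM]
    apply intervalIntegral.integral_nonneg hr.1
    intro s hs
    have hsIcc : s ∈ Icc (0 : ℝ) R := ⟨hs.1, hs.2.trans hr.2⟩
    have := hρ_nonneg s hsIcc; positivity
  -- enthalpy
  set E : ℝ → ℝ := fun s => γ / (γ - 1) * K * ρ s ^ (γ - 1) with hE
  have hEderiv : ∀ r ∈ Ioo (0 : ℝ) R, HasDerivAt E (-(G * M r) / r ^ 2) r := by
    intro r hr
    have hρp : 0 < ρ r := hρ_pos r ⟨hr.1.le, hr.2⟩
    have hrne : r ≠ 0 := hr.1.ne'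
    have hd1 : HasDerivAt (fun s => ρ s ^ (γ - 1)) (ρ' r * (γ - 1) * ρ r ^ (γ - 1 - 1)) r :=
      (hρ_deriv r hr).rpow_const (Or.inl hρp.ne')
    have hd2 : HasDerivAt E (γ / (γ - 1) * K * (ρ' r * (γ - 1) * ρ r ^ (γ - 1 - 1))) r :=
      hd1.const_mul _
    have hd3 : HasDerivAt (fun s => K * ρ s ^ γ) (K * (ρ' r * γ * ρ r ^ (γ - 1))) r :=
      ((hρ_deriv r hr).rpow_const (Or.inl hρp.ne')).const_mul K
    have heq : K * (ρ' r * γ * ρ r ^ (γ - 1)) = -(G * M r * ρ r) / r ^ 2 :=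
      hd3.unique (hp_deriv r hr)
    have hpow : ρ r ^ (γ - 1 - 1) * ρ r = ρ r ^ (γ - 1) := by
      calc ρ r ^ (γ - 1 - 1) * ρ r = ρ r ^ (γ - 1 - 1) * ρ r ^ (1 : ℝ) := by
            rw [Real.rpow_one]
        _ = ρ r ^ (γ - 1 - 1 + 1) := (Real.rpow_add hρp _ _).symm
        _ = ρ r ^ (γ - 1) := by norm_num
    convert hd2 using 1
    have hmul : γ / (γ - 1) * K * (ρ' r * (γ - 1) * ρ r ^ (γ - 1 - 1)) * ρ r
        = -(G * M r) / r ^ 2 * ρ r := by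
      have h1 : γ / (γ - 1) * K * (ρ' r * (γ - 1) * ρ r ^ (γ - 1 - 1)) * ρ r
          = K * (ρ' r * γ * (ρ r ^ (γ - 1 - 1) * ρ r)) := by
        field_simp
      rw [h1, hpow, heq]
      ring
    exact (mul_right_cancel₀ hρp.ne' hmul).symm
  -- the primitive F
  set F : ℝ → ℝ := fun r => 6 * (γ - 1) / (5 * γ - 6) * (G * M r ^ 2 / (2 * r))
      - 3 * (γ - 1) / (5 * γ - 6) * (E r * M r)
      + γ / (5 * γ - 6) * (4 * Real.pi * r ^ 3 * (K * ρ r ^ γ)) with hF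
  have hFderiv : ∀ r ∈ Ioo (0 : ℝ) R,
      HasDerivAt F (4 * Real.pi * G * (M r * (r * ρ r))) r := by
    intro r hr
    have hρp : 0 < ρ r := hρ_pos r ⟨hr.1.le, hr.2⟩
    have hrne : r ≠ 0 := hr.1.ne'
    have hMd := hMderiv r hr
    have hA := ((hMd.pow 2).const_mul G).div ((hasDerivAt_id r).const_mul 2)
      (by simp [hrne])
    have hB := (hEderiv r hr).mul hMd
    have hC4 := ((hasDerivAt_pow 3 r).const_mul (4 * Real.pi)).mul (hp_deriv r hr)
    have hT := ((hA.const_mul (6 * (γ - 1) / (5 * γ - 6))).sub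
          (hB.const_mul (3 * (γ - 1) / (5 * γ - 6)))).add
        (hC4.const_mul (γ / (5 * γ - 6)))
    refine hT.congr_deriv (Eq.symm ?_)
    have hpow2 : ρ r ^ (γ - 1) * ρ r = ρ r ^ γ := by
      calc ρ r ^ (γ - 1) * ρ r = ρ r ^ (γ - 1) * ρ r ^ (1 : ℝ) := by rw [Real.rpow_one]
        _ = ρ r ^ (γ - 1 + 1) := (Real.rpow_add hρp _ _).symm
        _ = ρ r ^ γ := by norm_num
    have hEM : E r * (4 * Real.pi * r ^ 2 * ρ r)
        = γ / (γ - 1) * (4 * Real.pi * r ^ 2 * (K * ρ r ^ γ)) := by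
      simp only [hE]
      rw [← hpow2]
      field_simp
    rw [hEM, id_eq, Pi.pow_apply]
    field_simp
    linear_combination (-(8 * Real.pi * G * M r * r ^ 3 * ρ r)) * (mul_inv_cancel₀ h5ne)
  -- integrability of the nice integrand
  have hgcont : ContinuousOn (fun r => 4 * Real.pi * G * (M r * (r * ρ r))) (Icc 0 R) :=
    continuousOn_const.mul (hMcont.mul (continuousOn_id.mul hρ_cont))
  have hgint : IntervalIntegrable (fun r => 4 * Real.pi * G * (M r * (r * ρ r)))
      MeasureTheory.volume 0 R := hgcont.intervalIntegrable_of_Icc hR.le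
  -- continuity of E and p on Icc
  have hEcont : ContinuousOn E (Icc 0 R) := by
    simp only [hE]
    exact continuousOn_const.mul (hρ_cont.rpow_const fun x hx => Or.inr (by linarith))
  have hpcont : ContinuousOn (fun r => 4 * Real.pi * r ^ 3 * (K * ρ r ^ γ)) (Icc 0 R) := by
    exact ((continuous_const.mul (continuous_pow 3)).continuousOn).mul
      (continuousOn_const.mul (hρ_cont.rpow_const fun x hx => Or.inr (by linarith)))
  -- continuity of F on Ioc 0 R
  have hsub : Ioc (0 : ℝ) R ⊆ Icc 0 R := Ioc_subset_Icc_self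
  have hFcont : ContinuousOn F (Ioc 0 R) := by
    simp only [hF]
    refine ContinuousOn.add (ContinuousOn.sub ?_ ?_) ?_
    · refine continuousOn_const.mul (ContinuousOn.div
        (continuousOn_const.mul ((hMcont.mono hsub).pow 2))
        (continuousOn_const.mul continuousOn_id) ?_)
      intro x hx
      have : x ≠ 0 := ne_of_gt hx.1
      simp [this]
    · exact continuousOn_const.mul ((hEcont.mono hsub).mul (hMcont.mono hsub))
    · exact continuousOn_const.mul (hpcont.mono hsub)
  -- limit at R
  have hFR : F R = 3 * (γ - 1) / (5 * γ - 6) * (G * M R ^ 2 / R) := by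
    simp only [hF, hE, hρR]
    rw [Real.zero_rpow hγne, Real.zero_rpow hγne0]
    field_simp
    ring
  have htR : Filter.Tendsto F (nhdsWithin R (Iio R))
      (nhds (3 * (γ - 1) / (5 * γ - 6) * (G * M R ^ 2 / R))) := by
    have h1 : ContinuousWithinAt F (Ioc 0 R) R := hFcont R (right_mem_Ioc.2 hR)
    have h2 : Filter.Tendsto F (nhdsWithin R (Ioc 0 R)) (nhds (F R)) := h1
    have h3 : (nhdsWithin R (Iio R)) = nhdsWithin R (Ioo 0 R) :=
      (nhdsWithin_Ioo_eq_nhdsLT hR).symm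
    rw [hFR] at h2
    refine h2.mono_left ?_
    rw [h3]
    exact nhdsWithin_mono _ Ioo_subset_Ioc_self
  -- limit at 0
  have hmem0 : nhdsWithin (0 : ℝ) (Ioi 0) ≤ nhdsWithin (0 : ℝ) (Icc 0 R) := by
    rw [← nhdsWithin_Ioo_eq_nhdsGT hR]
    exact nhdsWithin_mono _ Ioo_subset_Icc_self
  have h0mem : (0 : ℝ) ∈ Icc (0 : ℝ) R := ⟨le_rfl, hR.le⟩
  have tB : Filter.Tendsto (fun r => E r * M r) (nhdsWithin (0 : ℝ) (Ioi 0)) (nhds 0) := by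
    have h1 : ContinuousWithinAt (fun r => E r * M r) (Icc 0 R) 0 :=
      (hEcont.mul hMcont) 0 h0mem
    have h2 := h1.mono_left hmem0
    simpa [hM0] using h2
  have tC : Filter.Tendsto (fun r => 4 * Real.pi * r ^ 3 * (K * ρ r ^ γ))
      (nhdsWithin (0 : ℝ) (Ioi 0)) (nhds 0) := by
    have h1 := (hpcont 0 h0mem).mono_left hmem0
    simpa using h1
  have tA : Filter.Tendsto (fun r => G * M r ^ 2 / (2 * r))
      (nhdsWithin (0 : ℝ) (Ioi 0)) (nhds 0) := by
    have hbound : ∀ᶠ r in nhdsWithin (0 : ℝ) (Ioi 0),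
        G * M r ^ 2 / (2 * r) ≤ G * (4 * Real.pi * C) ^ 2 / 2 * r ^ 5 := by
      filter_upwards [Ioo_mem_nhdsGT hR] with r hr
      have hrIcc : r ∈ Icc (0 : ℝ) R := ⟨hr.1.le, hr.2.le⟩
      have h1 : |M r| ≤ 4 * Real.pi * C * r ^ 3 := hMabs r hrIcc
      have h2 : M r ^ 2 ≤ (4 * Real.pi * C * r ^ 3) ^ 2 := by
        rw [← sq_abs]
        exact pow_le_pow_left₀ (abs_nonneg _) h1 2
      rw [div_le_iff₀ (by linarith [hr.1] : (0 : ℝ) < 2 * r)]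
      have h3 : G * M r ^ 2 ≤ G * (4 * Real.pi * C * r ^ 3) ^ 2 :=
        mul_le_mul_of_nonneg_left h2 hG.le
      calc G * M r ^ 2 ≤ G * (4 * Real.pi * C * r ^ 3) ^ 2 := h3
        _ = G * (4 * Real.pi * C) ^ 2 / 2 * r ^ 5 * (2 * r) := by ring
    have hnonneg : ∀ᶠ r in nhdsWithin (0 : ℝ) (Ioi 0), 0 ≤ G * M r ^ 2 / (2 * r) := by
      filter_upwards [Ioo_mem_nhdsGT hR] with r hr
      have : (0 : ℝ) < 2 * r := by linarith [hr.1]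
      positivity
    have hgtend : Filter.Tendsto (fun r : ℝ => G * (4 * Real.pi * C) ^ 2 / 2 * r ^ 5)
        (nhdsWithin (0 : ℝ) (Ioi 0)) (nhds 0) := by
      have hc : Continuous (fun r : ℝ => G * (4 * Real.pi * C) ^ 2 / 2 * r ^ 5) :=
        continuous_const.mul (continuous_pow 5)
      have h2 := tendsto_nhdsWithin_of_tendsto_nhds (s := Ioi (0:ℝ)) (hc.tendsto 0)
      simpa using h2
    exact tendsto_of_tendsto_of_tendsto_of_le_of_le' tendsto_const_nhds hgtend hnonneg hbound
  have ht0 : Filter.Tendsto F (nhdsWithin (0 : ℝ) (Ioi 0)) (nhds 0) := by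
    have := ((tA.const_mul (6 * (γ - 1) / (5 * γ - 6))).sub
          (tB.const_mul (3 * (γ - 1) / (5 * γ - 6)))).add
        (tC.const_mul (γ / (5 * γ - 6)))
    simpa [hF] using this
  -- FTC
  have hFTC := intervalIntegral.integral_eq_sub_of_hasDerivAt_of_tendsto hR hFderiv hgint ht0 htR
  have hrewrite : ∀ r : ℝ, G * M r * (4 * Real.pi * r ^ 2 * ρ r) / r
      = 4 * Real.pi * G * (M r * (r * ρ r)) := by
    intro r
    rcases eq_or_ne r 0 with h | h
    · simp [h]
    · field_simp
  simp only [hrewrite]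
  rw [hFTC]
  field_simp
  ring
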